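/- Let Ω be a countable set and let θ : E → E' be a monoid isomorphism onto a closed submonoid E' of Tr(Ω). Then M' = θ(M) is closed in Tr(Ω), and the restriction θ↾M : M → M' is a homeomorphism. -/

import Mathlib

set_option autoImplicit false
set_option maxHeartbeats 1000000

/-- The monoid `M` of strictly order-preserving maps `ℚ → ℚ`
(self-embeddings of `(ℚ,<)`), a submonoid of `Tr(ℚ) = Function.End ℚ`. -/
def Mmon : Submonoid (Function.End ℚ) where
  carrier := {f | StrictMono f}
  mul_mem' := fun hf hg => hf.comp hg
  one_mem' := strictMono_id

/-- The monoid `E` of order-preserving maps `ℚ → ℚ` (endomorphisms of `(ℚ,≤)`),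
a submonoid of `Tr(ℚ) = Function.End ℚ`. -/
def Emon : Submonoid (Function.End ℚ) where
  carrier := {f | Monotone f}
  mul_mem' := fun hf hg => hf.comp hg
  one_mem' := monotone_id

/-- Topology of pointwise convergence on `Tr(α) = Function.End α` (the codomain
taken discrete, so the sub-basic open sets are `{f : f x = y}`). -/
def funTop (α : Type*) : TopologicalSpace (Function.End α) :=
  @Pi.topologicalSpace α (fun _ => α) (fun _ => ⊥)

/-- The induced (subspace) topology on a submonoid of `Tr(α) = Function.End α`. -/
def monTop {α : Type*} (S : Submonoid (Function.End α)) : TopologicalSpace S :=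
  (funTop α).induced Subtype.val

/-- The inclusion `M →* E`. -/
def MtoE : Mmon →* Emon where
  toFun f := ⟨f.1, StrictMono.monotone f.2⟩
  map_one' := rfl
  map_mul' _ _ := rfl

namespace L41

open Topology Filter Set

/-! ### Generic lemmas about `funTop` -/

section FunTopLemmas

variable {α : Type*}

theorem isOpen_cylinder (K : Finset α) (v : α → α) :
    @IsOpen _ (funTop α) {u : Function.End α | ∀ a ∈ K, u a = v a} := by
  letI : TopologicalSpace α := ⊥
  haveI : DiscreteTopology α := ⟨rfl⟩
  letI : TopologicalSpace (Function.End α) := funTop α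
  have h : {u : Function.End α | ∀ a ∈ K, u a = v a} =
      ⋂ a ∈ (K : Set α), (fun u : Function.End α => u a) ⁻¹' {v a} := by
    ext u; simp [Set.mem_iInter]
  rw [h]
  exact (K : Set α).toFinite.isOpen_biInter fun a _ =>
    (continuous_apply a).isOpen_preimage _ (isOpen_discrete _)

theorem isOpen_coord (a : α) (b : α) :
    @IsOpen _ (funTop α) {u : Function.End α | u a = b} := by
  letI : TopologicalSpace α := ⊥
  haveI : DiscreteTopology α := ⟨rfl⟩
  letI : TopologicalSpace (Function.End α) := funTop α
  have h : {u : Function.End α | u a = b} =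
      (fun u : Function.End α => u a) ⁻¹' ({b} : Set α) := rfl
  rw [h]
  exact (continuous_apply a).isOpen_preimage _ (isOpen_discrete _)

theorem cylinder_mem_nhds {u₀ : Function.End α} {t : Set (Function.End α)}
    (ht : t ∈ @nhds _ (funTop α) u₀) :
    ∃ K : Finset α, {u : Function.End α | ∀ a ∈ K, u a = u₀ a} ⊆ t := by
  letI : TopologicalSpace α := ⊥
  haveI : DiscreteTopology α := ⟨rfl⟩
  letI : TopologicalSpace (Function.End α) := funTop α
  have hn : @nhds _ (funTop α) u₀ = Filter.pi fun a : α => pure (u₀ a) := by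
    have : (funTop α) = (Pi.topologicalSpace : TopologicalSpace (∀ _ : α, α)) := rfl
    rw [show @nhds _ (funTop α) u₀ = @nhds (∀ _ : α, α) Pi.topologicalSpace u₀ from rfl]
    refine (nhds_pi (a := (u₀ : ∀ _ : α, α))).trans ?_
    congr 1
    ext a
    rw [nhds_discrete]
  rw [hn] at ht
  obtain ⟨I, hIfin, ts, hts, hsub⟩ := Filter.mem_pi.mp ht
  refine ⟨hIfin.toFinset, fun u hu => hsub fun a ha => ?_⟩
  have : u a = u₀ a := hu a (hIfin.mem_toFinset.mpr ha)
  rw [this]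
  exact hts a

theorem mem_closure_funTop {A : Set (Function.End α)} {y : Function.End α} :
    y ∈ @closure _ (funTop α) A ↔ ∀ K : Finset α, ∃ u ∈ A, ∀ a ∈ K, u a = y a := by
  letI : TopologicalSpace (Function.End α) := funTop α
  constructor
  · intro hy K
    have hU := isOpen_cylinder K y
    have hyU : y ∈ {u : Function.End α | ∀ a ∈ K, u a = y a} := fun a _ => rfl
    rcases mem_closure_iff.mp hy _ hU hyU with ⟨u, hu1, hu2⟩
    exact ⟨u, hu2, hu1⟩
  · intro h
    rw [mem_closure_iff_nhds]
    intro t ht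
    obtain ⟨K, hK⟩ := cylinder_mem_nhds ht
    obtain ⟨u, huA, hu⟩ := h K
    exact ⟨u, hK hu, huA⟩

end FunTopLemmas

/-! ### Constants, the map ψ, equivariance -/

section Psi

variable {Ω : Type} {E' : Submonoid (Function.End Ω)} (θ : Emon ≃* E')

/-- The constant map `q` as an element of `E`. -/
def constE (q : ℚ) : Emon := ⟨(fun _ => q : Function.End ℚ), monotone_const⟩

theorem constE_mul (q : ℚ) (g : Emon) : constE q * g = constE q := Subtype.ext rfl

theorem mul_constE (g : Emon) (q : ℚ) : g * constE q = constE (g.1 q) := Subtype.ext rfl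

theorem constE_injective : Function.Injective constE := by
  intro p q h
  exact congrFun (congrArg Subtype.val h) 0

/-- The "step" function jumping from 0 to 1 at `s`, as an element of `E`. -/
def stepE (s : ℚ) : Emon :=
  ⟨(fun q => if q ≤ s then 0 else 1 : Function.End ℚ), by
    intro a b hab
    dsimp only
    by_cases hb : b ≤ s
    · rw [if_pos (le_trans hab hb), if_pos hb]
    · by_cases ha : a ≤ s
      · rw [if_pos ha, if_neg hb]; norm_num
      · rw [if_neg ha, if_neg hb]⟩

theorem exists_x0 : ∃ x₀ : Ω, ((θ (constE 0) : E') : Function.End Ω) x₀ ≠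
    ((θ (constE 1) : E') : Function.End Ω) x₀ := by
  by_contra h
  push_neg at h
  have h1 : θ (constE 0) = θ (constE 1) := Subtype.ext (funext h)
  have h2 := constE_injective (θ.injective h1)
  norm_num at h2

/-- `ψ q = θ(c_q)(x₀)`. -/
def psi (x₀ : Ω) (q : ℚ) : Ω := ((θ (constE q) : E') : Function.End Ω) x₀

theorem psi_equivariant (x₀ : Ω) (g : Emon) (q : ℚ) :
    ((θ g : E') : Function.End Ω) (psi θ x₀ q) = psi θ x₀ (g.1 q) := by
  have h1 : ((θ g : E') : Function.End Ω) (psi θ x₀ q)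
      = ((θ g * θ (constE q) : E') : Function.End Ω) x₀ := rfl
  rw [h1, ← map_mul, mul_constE]
  rfl

theorem psi_injective {x₀ : Ω}
    (hx₀ : ((θ (constE 0) : E') : Function.End Ω) x₀ ≠
      ((θ (constE 1) : E') : Function.End Ω) x₀) :
    Function.Injective (psi θ x₀) := by
  have key : ∀ p r : ℚ, p < r → psi θ x₀ p ≠ psi θ x₀ r := by
    intro p r hpr heq
    have h0 : ((θ (stepE p) : E') : Function.End Ω) (psi θ x₀ p)
        = psi θ x₀ 0 := by
      rw [psi_equivariant]
      congr 1
      show (if p ≤ p then (0:ℚ) else 1) = 0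
      rw [if_pos le_rfl]
    have h1 : ((θ (stepE p) : E') : Function.End Ω) (psi θ x₀ r)
        = psi θ x₀ 1 := by
      rw [psi_equivariant]
      congr 1
      show (if r ≤ p then (0:ℚ) else 1) = 1
      rw [if_neg (not_le.mpr hpr)]
    apply hx₀
    show psi θ x₀ 0 = psi θ x₀ 1
    rw [← h0, ← h1, heq]
  intro p r h
  rcases lt_trichotomy p r with h' | h' | h'
  · exact absurd h (key _ _ h')
  · exact h'
  · exact absurd h.symm (key _ _ h')

end Psi


/-! ### Closedness of `M' = θ(M)` -/

section Closed

variable {Ω : Type} {E' : Submonoid (Function.End Ω)} (θ : Emon ≃* E')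

theorem Mimage_closed (hE' : @IsClosed _ (funTop Ω) (E' : Set (Function.End Ω)))
    {x₀ : Ω}
    (hx₀ : ((θ (constE 0) : E') : Function.End Ω) x₀ ≠
      ((θ (constE 1) : E') : Function.End Ω) x₀) :
    @IsClosed _ (funTop Ω)
      {y : Function.End Ω | ∃ f : Mmon, ((θ (MtoE f) : E') : Function.End Ω) = y} := by
  classical
  letI : TopologicalSpace (Function.End Ω) := funTop Ω
  apply isClosed_of_closure_subset
  intro y hy
  have hyE : y ∈ (E' : Set (Function.End Ω)) := by
    have hsub : closure {y : Function.End Ω |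
        ∃ f : Mmon, ((θ (MtoE f) : E') : Function.End Ω) = y} ⊆
        closure (E' : Set (Function.End Ω)) := by
      apply closure_mono
      rintro z ⟨f, hf⟩
      rw [← hf]
      exact (θ (MtoE f)).2
    have := hsub hy
    rwa [hE'.closure_eq] at this
  set g : Emon := θ.symm ⟨y, hyE⟩ with hgdef
  have hgy : ((θ g : E') : Function.End Ω) = y := by
    rw [hgdef, MulEquiv.apply_symm_apply]
  have hinj : Function.Injective (g.1 : ℚ → ℚ) := by
    intro p r hpr
    obtain ⟨u, ⟨f, hf⟩, hu⟩ := (mem_closure_funTop).mp hy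
      {psi θ x₀ p, psi θ x₀ r}
    have hup : u (psi θ x₀ p) = y (psi θ x₀ p) := hu _ (by simp)
    have hur : u (psi θ x₀ r) = y (psi θ x₀ r) := hu _ (by simp)
    rw [← hf, psi_equivariant] at hup hur
    rw [← hgy, psi_equivariant] at hup hur
    have h1 : (MtoE f).1 p = g.1 p := psi_injective θ hx₀ hup
    have h2 : (MtoE f).1 r = g.1 r := psi_injective θ hx₀ hur
    have h3 : (MtoE f).1 p = (MtoE f).1 r := by rw [h1, h2, hpr]
    exact f.2.injective h3
  refine ⟨⟨g.1, Monotone.strictMono_of_injective g.2 hinj⟩, ?_⟩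
  have hM : MtoE ⟨g.1, Monotone.strictMono_of_injective g.2 hinj⟩ = g := Subtype.ext rfl
  rw [hM, hgy]

end Closed


/-! ### Extending a finite partial isomorphism of `ℚ` to an order automorphism -/

section Extend

open Order

theorem exists_orderIso_extend (s : Finset (ℚ × ℚ))
    (hs : ∀ p ∈ s, ∀ q ∈ s, cmp p.1 q.1 = cmp p.2 q.2) :
    ∃ g : ℚ ≃o ℚ, ∀ p ∈ s, g p.1 = p.2 := by
  let to_cofinal : ℚ ⊕ ℚ → Cofinal (PartialIso ℚ ℚ) := fun p =>
    Sum.recOn p (PartialIso.definedAtLeft ℚ) (PartialIso.definedAtRight ℚ)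
  let p₀ : PartialIso ℚ ℚ := ⟨s, hs⟩
  let our_ideal : Ideal (PartialIso ℚ ℚ) := idealOfCofinals p₀ to_cofinal
  let F := fun a => PartialIso.funOfIdeal a our_ideal
      (cofinal_meets_idealOfCofinals _ to_cofinal (Sum.inl a))
  let G := fun b => PartialIso.invOfIdeal b our_ideal
      (cofinal_meets_idealOfCofinals _ to_cofinal (Sum.inr b))
  refine ⟨OrderIso.ofCmpEqCmp (fun a => (F a).val) (fun b => (G b).val) fun a b => ?_, ?_⟩
  · rcases (F a).prop with ⟨f, hf, ha⟩
    rcases (G b).prop with ⟨g, hg, hb⟩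
    rcases our_ideal.directed _ hf _ hg with ⟨m, _, fm, gm⟩
    exact m.prop (a, _) (fm ha) (_, b) (gm hb)
  · intro p hp
    rcases (F p.1).prop with ⟨f, hf, ha⟩
    rcases our_ideal.directed _ hf _ (mem_idealOfCofinals p₀ to_cofinal) with ⟨m, _, fm, gm⟩
    have h := m.prop (p.1, (F p.1).val) (fm ha) (p.1, p.2) (gm hp)
    have h2 : cmp ((F p.1).val : ℚ) p.2 = Ordering.eq := by
      rw [← h, cmp_self_eq_eq]
    exact cmp_eq_eq_iff _ _ |>.mp h2

/-- Extend the restriction of a strictly monotone map to a finite set, to an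
order automorphism of `ℚ`. -/
theorem exists_orderIso_extend' (F : Finset ℚ) (f : ℚ → ℚ) (hf : StrictMono f) :
    ∃ g : ℚ ≃o ℚ, ∀ a ∈ F, g a = f a := by
  classical
  have hcmp : ∀ p ∈ F.image fun a => (a, f a), ∀ q ∈ F.image fun a => (a, f a),
      cmp p.1 q.1 = cmp p.2 q.2 := by
    intro p hp q hq
    simp only [Finset.mem_image] at hp hq
    obtain ⟨a, _, rfl⟩ := hp
    obtain ⟨b, _, rfl⟩ := hq
    rcases lt_trichotomy a b with h | h | h
    · rw [(cmp_eq_lt_iff _ _).mpr h, (cmp_eq_lt_iff _ _).mpr (hf h)]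
    · subst h; rw [cmp_self_eq_eq, cmp_self_eq_eq]
    · rw [(cmp_eq_gt_iff _ _).mpr h, (cmp_eq_gt_iff _ _).mpr (hf h)]
  obtain ⟨g, hg⟩ := exists_orderIso_extend (F.image fun a => (a, f a)) hcmp
  exact ⟨g, fun a ha => hg (a, f a) (Finset.mem_image_of_mem _ ha)⟩

end Extend


/-! ### The spaces `M` (strictly monotone maps) and `G` (automorphisms) of `ℚ` -/

/-- Strictly monotone maps, as a subset of `Tr(ℚ)`. -/
def Ms : Set (Function.End ℚ) := {v : Function.End ℚ | StrictMono v}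

/-- Order automorphisms of `ℚ`, as a subset of `Tr(ℚ)`. -/
def Gs : Set (Function.End ℚ) := {v : Function.End ℚ | StrictMono v ∧ Function.Surjective v}

/-- A strictly monotone map as an element of the monoid `E`. -/
def EvEmon (v : Function.End ℚ) (hv : StrictMono v) : Emon := ⟨v, hv.monotone⟩

theorem isClosed_Ms : @IsClosed _ (funTop ℚ) Ms := by
  letI : TopologicalSpace ℚ := ⊥
  haveI : DiscreteTopology ℚ := ⟨rfl⟩
  haveI : DiscreteTopology (ℚ × ℚ) := inferInstance
  letI : TopologicalSpace (Function.End ℚ) := funTop ℚ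
  have h : Ms = ⋂ pq : ℚ × ℚ,
      {v : Function.End ℚ | pq.1 < pq.2 → v pq.1 < v pq.2} := by
    ext v
    simp only [Ms, Set.mem_setOf_eq, Set.mem_iInter, Prod.forall]
    exact ⟨fun hv a b hab => hv hab, fun hv a b hab => hv a b hab⟩
  rw [h]
  refine isClosed_iInter fun pq => ?_
  have h2 : {v : Function.End ℚ | pq.1 < pq.2 → v pq.1 < v pq.2} =
      (fun v : Function.End ℚ => (v pq.1, v pq.2)) ⁻¹'
        {y : ℚ × ℚ | pq.1 < pq.2 → y.1 < y.2} := rfl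
  rw [h2]
  exact IsClosed.preimage
    (Continuous.prodMk (continuous_apply _) (continuous_apply _)) (isClosed_discrete _)

theorem measurableSet_Gs :
    @MeasurableSet _ (@borel (Function.End ℚ) (funTop ℚ)) Gs := by
  letI : TopologicalSpace ℚ := ⊥
  haveI : DiscreteTopology ℚ := ⟨rfl⟩
  letI : TopologicalSpace (Function.End ℚ) := funTop ℚ
  letI : MeasurableSpace (Function.End ℚ) := borel _
  haveI : BorelSpace (Function.End ℚ) := ⟨rfl⟩
  have h : Gs = Ms ∩ ⋂ r : ℚ, ⋃ q : ℚ, {v : Function.End ℚ | v q = r} := by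
    ext v
    simp only [Gs, Ms, Set.mem_setOf_eq, Set.mem_inter_iff, Set.mem_iInter, Set.mem_iUnion]
    exact ⟨fun hv => ⟨hv.1, fun r => hv.2 r⟩, fun hv => ⟨hv.1, fun r => hv.2 r⟩⟩
  rw [h]
  exact (isClosed_Ms.measurableSet).inter
    (MeasurableSet.iInter fun r => MeasurableSet.iUnion fun q =>
      (isOpen_coord q r).measurableSet)


/-! ### The key stabilizer lemma: Baire category argument -/

section Stab

variable {Ω : Type} [Countable Ω] {E' : Submonoid (Function.End Ω)} (θ : Emon ≃* E')

theorem stab_nbhd (hE' : @IsClosed _ (funTop Ω) (E' : Set (Function.End Ω)))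
    {x₀ : Ω}
    (hx₀ : ((θ (constE 0) : E') : Function.End Ω) x₀ ≠
      ((θ (constE 1) : E') : Function.End Ω) x₀)
    (x : Ω) :
    ∃ F : Finset ℚ, ∀ (v : Function.End ℚ) (hv : v ∈ Gs),
      (∀ a ∈ F, v a = a) →
      ((θ (EvEmon v hv.1) : E') : Function.End Ω) x = x := by
  classical
  letI tQ : TopologicalSpace ℚ := ⊥
  haveI dQ : DiscreteTopology ℚ := ⟨rfl⟩
  letI tQQ : TopologicalSpace (Function.End ℚ) := funTop ℚ
  letI tO : TopologicalSpace Ω := ⊥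
  haveI dO : DiscreteTopology Ω := ⟨rfl⟩
  letI tOO : TopologicalSpace (Function.End Ω) := funTop Ω
  haveI : PolishSpace ℚ := inferInstance
  haveI : PolishSpace Ω := inferInstance
  haveI hPQQ : PolishSpace (Function.End ℚ) := inferInstanceAs (PolishSpace (∀ _ : ℚ, ℚ))
  haveI hPOO : PolishSpace (Function.End Ω) := inferInstanceAs (PolishSpace (∀ _ : Ω, Ω))
  haveI hT2Q : T2Space (Function.End ℚ) := inferInstanceAs (T2Space (∀ _ : ℚ, ℚ))
  letI mQQ : MeasurableSpace (Function.End ℚ) := borel _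
  haveI bQQ : BorelSpace (Function.End ℚ) := ⟨rfl⟩
  letI mOO : MeasurableSpace (Function.End Ω) := borel _
  haveI bOO : BorelSpace (Function.End Ω) := ⟨rfl⟩
  haveI hPE : PolishSpace (E' : Set (Function.End Ω)) := hE'.polishSpace
  haveI hPM : PolishSpace Ms := isClosed_Ms.polishSpace
  haveI hBaire : BaireSpace Ms := by
    letI := TopologicalSpace.upgradeIsCompletelyMetrizable Ms
    infer_instance
  haveI hNe : Nonempty Ms := ⟨⟨(1 : Function.End ℚ), strictMono_id⟩⟩
  -- `θ⁻¹` as a continuous injective map from the Polish space `E'` to `Tr(ℚ)`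
  set Xi : ↥(E' : Set (Function.End Ω)) → Function.End ℚ :=
    fun u => ((θ.symm ⟨u.1, u.2⟩ : Emon) : Function.End ℚ) with hXidef
  have hXiEq : ∀ (u : ↥(E' : Set (Function.End Ω))) (q r : ℚ),
      Xi u q = r ↔ u.1 (psi θ x₀ q) = psi θ x₀ r := by
    intro u q r
    have h1 : u.1 (psi θ x₀ q) = psi θ x₀ ((θ.symm ⟨u.1, u.2⟩ : Emon).1 q) := by
      have h2 := psi_equivariant (θ := θ) x₀ (θ.symm ⟨u.1, u.2⟩) q
      rwa [MulEquiv.apply_symm_apply] at h2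
    constructor
    · intro h
      rw [h1]
      exact congrArg (psi θ x₀) h
    · intro h
      rw [h1] at h
      exact psi_injective θ hx₀ h
  have hXicont : Continuous Xi := by
    refine continuous_pi fun q => ?_
    rw [continuous_discrete_rng]
    intro r
    have hset : (fun u : ↥(E' : Set (Function.End Ω)) => Xi u q) ⁻¹' {r}
        = (fun u : ↥(E' : Set (Function.End Ω)) => u.1 (psi θ x₀ q)) ⁻¹' {psi θ x₀ r} := by
      ext u
      simp only [Set.mem_preimage, Set.mem_singleton_iff]
      exact hXiEq u q r
    rw [hset]
    exact (isOpen_coord (psi θ x₀ q) (psi θ x₀ r)).preimage continuous_subtype_val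
  have hXiinj : Function.Injective Xi := by
    intro u u' h
    have h1 : (θ.symm ⟨u.1, u.2⟩ : Emon) = θ.symm ⟨u'.1, u'.2⟩ := Subtype.ext h
    have h2 := θ.symm.injective h1
    have h3 : u.1 = u'.1 := congrArg Subtype.val h2
    exact Subtype.ext h3
  have hEmb : MeasurableEmbedding Xi := hXicont.measurableEmbedding hXiinj
  -- the sets `A y`
  set TH : Ms → Function.End Ω :=
    fun v => ((θ (EvEmon v.1 v.2) : E') : Function.End Ω) with hTHdef
  set A : Ω → Set Ms := fun y => {v : Ms | v.1 ∈ Gs ∧ TH v x = y} with hAdef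
  set Gsub : Set Ms := {v : Ms | v.1 ∈ Gs} with hGsubdef
  -- `Gsub` is a dense Gδ
  have hGsubGδ : IsGδ Gsub := by
    have h : Gsub = ⋂ r : ℚ, ⋃ q : ℚ, {v : Ms | v.1 q = r} := by
      rw [hGsubdef]
      ext v
      simp only [Gs, Set.mem_setOf_eq, Set.mem_iInter, Set.mem_iUnion]
      exact ⟨fun hv r => hv.2 r, fun hv => ⟨v.2, fun r => hv r⟩⟩
    rw [h]
    refine IsGδ.iInter fun r => IsOpen.isGδ (isOpen_iUnion fun q => ?_)
    exact (isOpen_coord q r).preimage continuous_subtype_val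
  have hGsubDense : Dense Gsub := by
    rw [dense_iff_inter_open]
    rintro U hU ⟨v₀, hv₀⟩
    obtain ⟨W, hWnhds, hWsub⟩ : ∃ W ∈ nhds (v₀.1 : Function.End ℚ),
        Subtype.val ⁻¹' W ⊆ U := by
      have hmem : U ∈ nhds v₀ := hU.mem_nhds hv₀
      rw [nhds_subtype] at hmem
      exact Filter.mem_comap.mp hmem
    obtain ⟨K, hK⟩ := cylinder_mem_nhds hWnhds
    obtain ⟨g, hg⟩ := exists_orderIso_extend' K v₀.1 v₀.2
    refine ⟨⟨(g : ℚ → ℚ), g.strictMono⟩, ?_, ?_⟩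
    · apply hWsub
      apply hK
      intro a ha
      exact hg a ha
    · exact ⟨g.strictMono, g.surjective⟩
  -- some `A y₀` is non-meager
  have hex : ∃ y₀ : Ω, ¬ IsMeagre (A y₀) := by
    by_contra hcon
    push_neg at hcon
    have h1 : (⋂ y : Ω, (A y)ᶜ) ∈ residual Ms :=
      (countable_iInter_mem).mpr fun y => (hcon y : (A y)ᶜ ∈ residual _)
    have h2 : Gsub ∈ residual Ms := residual_of_dense_Gδ hGsubGδ hGsubDense
    have h3 := dense_of_mem_residual (Filter.inter_mem h1 h2)
    obtain ⟨v, hv⟩ := h3.nonempty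
    rw [Set.mem_inter_iff, Set.mem_iInter] at hv
    exact hv.1 (TH v x) ⟨hv.2, rfl⟩
  obtain ⟨y₀, hy₀⟩ := hex
  -- `A y₀` is Baire measurable
  have hAmeas : MeasurableSet (A y₀) := by
    have hBmeas : MeasurableSet {u : ↥(E' : Set (Function.End Ω)) |
        u.1 x = y₀ ∧ Xi u ∈ Gs} := by
      have : {u : ↥(E' : Set (Function.End Ω)) | u.1 x = y₀ ∧ Xi u ∈ Gs}
          = {u : ↥(E' : Set (Function.End Ω)) | u.1 x = y₀} ∩ Xi ⁻¹' Gs := rfl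
      rw [this]
      apply MeasurableSet.inter
      · exact ((isOpen_coord x y₀).preimage continuous_subtype_val).measurableSet
      · exact hXicont.measurable measurableSet_Gs
    have hAeq : A y₀ = Subtype.val ⁻¹'
        (Xi '' {u : ↥(E' : Set (Function.End Ω)) | u.1 x = y₀ ∧ Xi u ∈ Gs}) := by
      ext v
      constructor
      · rintro ⟨hvG, hvx⟩
        have hXieq : Xi ⟨(θ (EvEmon v.1 v.2) : E').1, (θ (EvEmon v.1 v.2)).2⟩ = v.1 := by
          show ((θ.symm (θ (EvEmon v.1 v.2)) : Emon) : Function.End ℚ) = v.1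
          rw [MulEquiv.symm_apply_apply]
          rfl
        refine ⟨⟨(θ (EvEmon v.1 v.2) : E').1, (θ (EvEmon v.1 v.2)).2⟩, ⟨?_, ?_⟩, ?_⟩
        · exact hvx
        · rw [hXieq]; exact hvG
        · exact hXieq
      · rintro ⟨u, ⟨hux, huG⟩, huv⟩
        have hg : EvEmon v.1 v.2 = θ.symm ⟨u.1, u.2⟩ := by
          apply Subtype.ext
          show v.1 = ((θ.symm ⟨u.1, u.2⟩ : Emon) : Function.End ℚ)
          rw [← huv]
        constructor
        · rw [← huv]; exact huG
        · show ((θ (EvEmon v.1 v.2) : E') : Function.End Ω) x = y₀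
          rw [hg, MulEquiv.apply_symm_apply]
          exact hux
    rw [hAeq]
    exact measurable_subtype_coe (hEmb.measurableSet_image.mpr hBmeas)
  have hABP : BaireMeasurableSet (A y₀) := hAmeas.baireMeasurableSet
  obtain ⟨U, hUopen, hUeq⟩ := hABP.residualEq_isOpen
  set D : Set Ms := {v : Ms | ¬ (v ∈ A y₀ ↔ v ∈ U)} with hDdef
  have hDmeag : IsMeagre D := by
    show Dᶜ ∈ residual _
    apply Filter.mem_of_superset hUeq
    intro v hv
    simp only [hDdef, Set.mem_compl_iff, Set.mem_setOf_eq, not_not]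
    exact iff_of_eq hv
  -- a point and a cylinder neighborhood inside `U`
  have hUne : ∃ z₀ : Ms, z₀ ∈ U ∧ z₀ ∈ A y₀ := by
    by_contra hcon
    push_neg at hcon
    apply hy₀
    apply hDmeag.mono
    intro v hv
    simp only [hDdef, Set.mem_setOf_eq]
    intro hiff
    exact hcon v (hiff.mp hv) hv
  obtain ⟨z₀, hz₀U, hz₀A⟩ := hUne
  obtain ⟨W, hWnhds, hWsub⟩ : ∃ W ∈ nhds (z₀.1 : Function.End ℚ),
      Subtype.val ⁻¹' W ⊆ U := by
    have hmem : U ∈ nhds z₀ := hUopen.mem_nhds hz₀U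
    rw [nhds_subtype] at hmem
    exact Filter.mem_comap.mp hmem
  obtain ⟨K, hK⟩ := cylinder_mem_nhds hWnhds
  set V : Set Ms := {v : Ms | ∀ a ∈ K, v.1 a = z₀.1 a} with hVdef
  have hVopen : IsOpen V := (isOpen_cylinder K z₀.1).preimage continuous_subtype_val
  have hVU : V ⊆ U := fun v hv => hWsub (hK hv)
  have hz₀V : z₀ ∈ V := fun a _ => rfl
  -- conclusion: `K` works
  refine ⟨K, ?_⟩
  intro w hw hwfix
  set wIso := StrictMono.orderIsoOfSurjective w hw.1 hw.2 with hwIsodef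
  have hwcoe : ∀ q, wIso q = w q := fun q => rfl
  have hwInvFix : ∀ a ∈ K, wIso.symm a = a := by
    intro a ha
    have h1 : wIso a = a := by rw [hwcoe]; exact hwfix a ha
    have h2 := OrderIso.symm_apply_apply wIso a
    rw [h1] at h2
    exact h2
  -- the right translation homeomorphism
  set R : Ms → Ms := fun v => ⟨v.1 ∘ w, StrictMono.comp (v.2 : StrictMono v.1) hw.1⟩
    with hRdef
  set R' : Ms → Ms := fun v => ⟨v.1 ∘ (wIso.symm : ℚ → ℚ),
    StrictMono.comp (v.2 : StrictMono v.1) wIso.symm.strictMono⟩ with hR'def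
  have hRR' : ∀ v, R (R' v) = v := by
    intro v
    apply Subtype.ext
    funext q
    show v.1 (wIso.symm (w q)) = v.1 q
    have : w q = wIso q := rfl
    rw [this, OrderIso.symm_apply_apply]
  have hR'R : ∀ v, R' (R v) = v := by
    intro v
    apply Subtype.ext
    funext q
    show v.1 (w (wIso.symm q)) = v.1 q
    have : w (wIso.symm q) = wIso (wIso.symm q) := rfl
    rw [this, OrderIso.apply_symm_apply]
  have hRcont : Continuous R := by
    apply Continuous.subtype_mk
    refine continuous_pi fun q => ?_
    exact (continuous_apply (w q)).comp continuous_subtype_val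
  have hR'cont : Continuous R' := by
    apply Continuous.subtype_mk
    refine continuous_pi fun q => ?_
    exact (continuous_apply (wIso.symm q)).comp continuous_subtype_val
  set RH : Homeomorph Ms Ms := ⟨⟨R, R', hR'R, hRR'⟩, hRcont, hR'cont⟩ with hRHdef
  have hD' : IsMeagre (RH.symm ⁻¹' D) :=
    hDmeag.preimage_of_isOpenMap RH.symm.continuous RH.symm.isOpenMap
  have hVD : ¬ (V ⊆ D ∪ RH.symm ⁻¹' D) := by
    intro hsub
    have hUn : IsMeagre (D ∪ RH.symm ⁻¹' D) := by
      show (D ∪ RH.symm ⁻¹' D)ᶜ ∈ residual _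
      rw [Set.compl_union]
      exact Filter.inter_mem hDmeag hD'
    have hVm : IsMeagre V := hUn.mono hsub
    have hdense : Dense Vᶜ := dense_of_mem_residual hVm
    obtain ⟨v, hv1, hv2⟩ := hdense.inter_open_nonempty V hVopen ⟨z₀, hz₀V⟩
    exact hv2 hv1
  obtain ⟨z, hzV, hzD⟩ := Set.not_subset.mp hVD
  have hzD1 : z ∉ D := fun h => hzD (Set.mem_union_left _ h)
  have hzD2 : RH.symm z ∉ D := fun h => hzD (Set.mem_union_right _ h)
  have hzA : z ∈ A y₀ := by
    have hiff : z ∈ A y₀ ↔ z ∈ U := not_not.mp hzD1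
    exact hiff.mpr (hVU hzV)
  set v₁ : Ms := RH.symm z with hv₁def
  have hv₁V : v₁ ∈ V := by
    intro a ha
    show z.1 (wIso.symm a) = z₀.1 a
    rw [hwInvFix a ha]
    exact hzV a ha
  have hv₁A : v₁ ∈ A y₀ := by
    have hiff : v₁ ∈ A y₀ ↔ v₁ ∈ U := not_not.mp hzD2
    exact hiff.mpr (hVU hv₁V)
  have hzRv₁ : z = R v₁ := (RH.apply_symm_apply z).symm
  obtain ⟨hzG, hzx⟩ := hzA
  obtain ⟨hv₁G, hv₁x⟩ := hv₁A
  have hmul : EvEmon z.1 z.2 = EvEmon v₁.1 v₁.2 * EvEmon w hw.1 := by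
    apply Subtype.ext
    show z.1 = v₁.1 ∘ w
    exact congrArg Subtype.val hzRv₁
  have hTHz : ((θ (EvEmon z.1 z.2) : E') : Function.End Ω) x = y₀ := hzx
  rw [hmul, map_mul] at hTHz
  have h5 : ((θ (EvEmon v₁.1 v₁.2) : E') : Function.End Ω)
      (((θ (EvEmon w hw.1) : E') : Function.End Ω) x) = y₀ := hTHz
  have hinj : Function.Injective ((θ (EvEmon v₁.1 v₁.2) : E') : Function.End Ω) := by
    set vIso := StrictMono.orderIsoOfSurjective v₁.1 hv₁G.1 hv₁G.2 with hvIsodef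
    have hleft : EvEmon (vIso.symm : ℚ → ℚ) vIso.symm.strictMono * EvEmon v₁.1 v₁.2 = 1 := by
      apply Subtype.ext
      funext q
      show vIso.symm (v₁.1 q) = q
      have h6 : v₁.1 q = vIso q := rfl
      rw [h6, OrderIso.symm_apply_apply]
    have h7 : ∀ c : Ω,
        ((θ (EvEmon (vIso.symm : ℚ → ℚ) vIso.symm.strictMono) : E') : Function.End Ω)
          (((θ (EvEmon v₁.1 v₁.2) : E') : Function.End Ω) c) = c := by
      intro c
      have h8 : θ (EvEmon (vIso.symm : ℚ → ℚ) vIso.symm.strictMono)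
          * θ (EvEmon v₁.1 v₁.2) = 1 := by
        rw [← map_mul, hleft, map_one]
      exact congrArg (fun u : E' => (u : Function.End Ω) c) h8
    intro a b hab
    calc a = _ := (h7 a).symm
    _ = _ := by rw [hab]
    _ = b := h7 b
  have h10 : ((θ (EvEmon v₁.1 v₁.2) : E') : Function.End Ω)
      (((θ (EvEmon w hw.1) : E') : Function.End Ω) x)
      = ((θ (EvEmon v₁.1 v₁.2) : E') : Function.End Ω) x :=
    h5.trans hv₁x.symm
  exact hinj h10

end Stab


/-! ### Local constancy of `θ` on `M` -/

section Cont

variable {Ω : Type} [Countable Ω] {E' : Submonoid (Function.End Ω)} (θ : Emon ≃* E')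

theorem key_cont (hE' : @IsClosed _ (funTop Ω) (E' : Set (Function.End Ω)))
    {x₀ : Ω}
    (hx₀ : ((θ (constE 0) : E') : Function.End Ω) x₀ ≠
      ((θ (constE 1) : E') : Function.End Ω) x₀)
    (x : Ω) :
    ∃ F : Finset ℚ, ∀ f f' : Mmon, (∀ a ∈ F, f.1 a = f'.1 a) →
      ((θ (MtoE f) : E') : Function.End Ω) x = ((θ (MtoE f') : E') : Function.End Ω) x := by
  classical
  letI : TopologicalSpace (Function.End Ω) := funTop Ω
  obtain ⟨F, hF⟩ := stab_nbhd θ hE' hx₀ x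
  set Tg : (ℚ ≃o ℚ) → Function.End Ω :=
    fun g => ((θ (EvEmon (g : ℚ → ℚ) g.strictMono) : E') : Function.End Ω) with hTgdef
  have pair : ∀ (z : Ω) (Fz : Finset ℚ),
      (∀ (v : Function.End ℚ) (hv : v ∈ Gs), (∀ a ∈ Fz, v a = a) →
        ((θ (EvEmon v hv.1) : E') : Function.End Ω) z = z) →
      ∀ (g g' : ℚ ≃o ℚ), (∀ a ∈ Fz, g a = g' a) → Tg g' z = Tg g z := by
    intro z Fz hFz g g' hgg'
    set v : Function.End ℚ := (g.symm : ℚ → ℚ) ∘ (g' : ℚ → ℚ) with hvdef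
    have hvG : v ∈ Gs :=
      ⟨(g.symm.strictMono).comp g'.strictMono, (g.symm.surjective).comp g'.surjective⟩
    have hvfix : ∀ a ∈ Fz, v a = a := by
      intro a ha
      show g.symm (g' a) = a
      rw [← hgg' a ha, OrderIso.symm_apply_apply]
    have hmul : EvEmon (g' : ℚ → ℚ) g'.strictMono
        = EvEmon (g : ℚ → ℚ) g.strictMono * EvEmon v hvG.1 := by
      apply Subtype.ext
      funext q
      show g' q = g (g.symm (g' q))
      rw [OrderIso.apply_symm_apply]
    show ((θ (EvEmon (g' : ℚ → ℚ) g'.strictMono) : E') : Function.End Ω) z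
      = ((θ (EvEmon (g : ℚ → ℚ) g.strictMono) : E') : Function.End Ω) z
    rw [hmul, map_mul]
    show ((θ (EvEmon (g : ℚ → ℚ) g.strictMono) : E') : Function.End Ω)
      (((θ (EvEmon v hvG.1) : E') : Function.End Ω) z)
      = ((θ (EvEmon (g : ℚ → ℚ) g.strictMono) : E') : Function.End Ω) z
    rw [hFz v hvG hvfix]
  have main : ∀ (f : Mmon) (g : ℚ ≃o ℚ), (∀ a ∈ F, g a = f.1 a) →
      ((θ (MtoE f) : E') : Function.End Ω) x = Tg g x := by
    intro f g hgf
    obtain ⟨e⟩ : Nonempty (ℕ ≃ ℚ) := ⟨(Denumerable.eqv ℚ).symm⟩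
    set FF : ℕ → Finset ℚ := fun n => F ∪ (Finset.range n).image e with hFFdef
    have hFsub : ∀ n, F ⊆ FF n := fun n => Finset.subset_union_left
    have hFFmono : ∀ {m n : ℕ}, m ≤ n → FF m ⊆ FF n := by
      intro m n hmn
      apply Finset.union_subset_union_right
      exact Finset.image_subset_image (Finset.range_subset_range.mpr hmn)
    have hFFmem : ∀ (q : ℚ) (n : ℕ), e.symm q < n → q ∈ FF n := by
      intro q n h
      apply Finset.mem_union_right
      exact Finset.mem_image.mpr ⟨e.symm q, Finset.mem_range.mpr h, e.apply_symm_apply q⟩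
    have hgseq : ∀ n : ℕ, ∃ gn : ℚ ≃o ℚ, ∀ a ∈ FF n, gn a = f.1 a :=
      fun n => exists_orderIso_extend' (FF n) f.1 f.2
    choose gseq hgseqspec using hgseq
    have hagree : ∀ z : Ω, ∃ n : ℕ, ∀ m, n ≤ m → Tg (gseq m) z = Tg (gseq n) z := by
      intro z
      obtain ⟨Fz, hFz⟩ := stab_nbhd θ hE' hx₀ z
      refine ⟨(Fz.sup fun a => e.symm a) + 1, ?_⟩
      intro m hm
      have hsubz : Fz ⊆ FF ((Fz.sup fun a => e.symm a) + 1) := by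
        intro a ha
        apply hFFmem
        exact Nat.lt_succ_of_le (Finset.le_sup (f := fun a => e.symm a) ha)
      have hag : ∀ a ∈ Fz, gseq ((Fz.sup fun a => e.symm a) + 1) a = gseq m a := by
        intro a ha
        have h1 := hgseqspec ((Fz.sup fun a => e.symm a) + 1) a (hsubz ha)
        have h2 := hgseqspec m a (hFFmono hm (hsubz ha))
        rw [h1, h2]
      exact pair z Fz hFz _ _ hag
    choose N hN using hagree
    set L : Function.End Ω := fun z => Tg (gseq (N z)) z with hLdef
    have hLclo : L ∈ (E' : Set (Function.End Ω)) := by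
      have hcl : L ∈ @closure _ (funTop Ω) (E' : Set (Function.End Ω)) := by
        rw [mem_closure_funTop]
        intro K
        refine ⟨Tg (gseq (K.sup N)),
          (θ (EvEmon ((gseq (K.sup N)) : ℚ → ℚ) (gseq (K.sup N)).strictMono)).2, ?_⟩
        intro z hz
        show Tg (gseq (K.sup N)) z = L z
        exact hN z (K.sup N) (Finset.le_sup hz)
      rwa [hE'.closure_eq] at hcl
    set h : Emon := θ.symm ⟨L, hLclo⟩ with hhdef
    have hθh : ((θ h : E') : Function.End Ω) = L := by
      rw [hhdef, MulEquiv.apply_symm_apply]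
    have hhf : h = MtoE f := by
      apply Subtype.ext
      funext q
      have h1 : L (psi θ x₀ q) = psi θ x₀ (h.1 q) := by
        rw [← hθh]
        exact psi_equivariant θ x₀ h q
      set m := max (N (psi θ x₀ q)) (e.symm q + 1) with hmdef
      have h2 : Tg (gseq m) (psi θ x₀ q) = L (psi θ x₀ q) :=
        hN _ m (le_max_left _ _)
      have h3 : Tg (gseq m) (psi θ x₀ q) = psi θ x₀ ((gseq m) q) :=
        psi_equivariant θ x₀ (EvEmon ((gseq m) : ℚ → ℚ) (gseq m).strictMono) q
      have h4 : (gseq m) q = f.1 q :=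
        hgseqspec m q (hFFmem q m (lt_of_lt_of_le (Nat.lt_succ_self _) (le_max_right _ _)))
      have h5 : psi θ x₀ (h.1 q) = psi θ x₀ (f.1 q) := by
        rw [← h1, ← h2, h3, h4]
      exact psi_injective θ hx₀ h5
    have hfin : ((θ (MtoE f) : E') : Function.End Ω) x = L x := by
      rw [← hhf, hθh]
    rw [hfin]
    show Tg (gseq (N x)) x = Tg g x
    refine pair x F hF g (gseq (N x)) ?_
    intro a ha
    rw [hgf a ha, hgseqspec (N x) a (hFsub (N x) ha)]
  refine ⟨F, ?_⟩
  intro f f' hff'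
  obtain ⟨g, hg⟩ := exists_orderIso_extend' F f.1 f.2
  have h1 := main f g (fun a ha => hg a ha)
  have h2 := main f' g (fun a ha => (hg a ha).trans (hff' a ha))
  rw [h1, h2]

end Cont

end L41

/-- **Lemma 4.0 (Lemma 4.1 in the paper's numbering).** If `θ : E → E'` is a monoid
isomorphism onto a closed submonoid `E'` of `Tr(Ω)`, `Ω` countable, then `M' = θ(M)`
is closed in `Tr(Ω)` and the restriction `θ↾M : M → M'` is a homeomorphism (that is,
`θ ∘ (M ↪ E)` is a topological embedding of `M` into `Tr(Ω)` with range `M'`). -/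
theorem restriction_to_M_is_closed_homeomorphism (Ω : Type) [Countable Ω]
    (E' : Submonoid (Function.End Ω))
    (hE' : @IsClosed _ (funTop Ω) (E' : Set (Function.End Ω)))
    (θ : Emon ≃* E') :
    @IsClosed _ (funTop Ω)
      {y : Function.End Ω | ∃ f : Mmon, (θ (MtoE f) : Function.End Ω) = y} ∧
    @Topology.IsEmbedding _ _ (monTop Mmon) (funTop Ω)
      (fun f : Mmon => (θ (MtoE f) : Function.End Ω)) ∧
    Set.range (fun f : Mmon => (θ (MtoE f) : Function.End Ω)) =
      {y : Function.End Ω | ∃ f : Mmon, (θ (MtoE f) : Function.End Ω) = y} := by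
  obtain ⟨x₀, hx₀⟩ := L41.exists_x0 θ
  have hinj : Function.Injective (fun f : Mmon => ((θ (MtoE f) : E') : Function.End Ω)) := by
    intro f f' h
    have h1 : θ (MtoE f) = θ (MtoE f') := Subtype.ext h
    have h2 := θ.injective h1
    have h3 : (f : Function.End ℚ) = f' := congrArg (Subtype.val : Emon → Function.End ℚ) h2
    exact Subtype.ext h3
  have hcont : @Continuous _ _ (monTop Mmon) (funTop Ω)
      (fun f : Mmon => ((θ (MtoE f) : E') : Function.End Ω)) := by
    letI tM : TopologicalSpace Mmon := monTop Mmon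
    letI tO : TopologicalSpace Ω := ⊥
    haveI : DiscreteTopology Ω := ⟨rfl⟩
    letI tQQ : TopologicalSpace (Function.End ℚ) := funTop ℚ
    letI tOO : TopologicalSpace (Function.End Ω) := funTop Ω
    refine continuous_pi fun x => ?_
    rw [continuous_discrete_rng]
    intro y
    rw [isOpen_iff_forall_mem_open]
    intro f₀ hf₀
    obtain ⟨F, hF⟩ := L41.key_cont θ hE' hx₀ x
    refine ⟨{f : Mmon | ∀ a ∈ F, (f : Function.End ℚ) a = (f₀ : Function.End ℚ) a},
      ?_, ?_, ?_⟩
    · intro f hf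
      have h1 := hF f f₀ hf
      simp only [Set.mem_preimage, Set.mem_singleton_iff] at hf₀ ⊢
      rw [h1]
      exact hf₀
    · exact (L41.isOpen_cylinder F f₀.1).preimage continuous_subtype_val
    · intro a _
      rfl
  have hval : @Continuous _ _
      ((funTop Ω).induced (fun f : Mmon => ((θ (MtoE f) : E') : Function.End Ω)))
      (funTop ℚ) (Subtype.val : Mmon → Function.End ℚ) := by
    letI tInd : TopologicalSpace Mmon :=
      (funTop Ω).induced (fun f : Mmon => ((θ (MtoE f) : E') : Function.End Ω))
    letI tQ : TopologicalSpace ℚ := ⊥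
    haveI : DiscreteTopology ℚ := ⟨rfl⟩
    letI tQQ : TopologicalSpace (Function.End ℚ) := funTop ℚ
    letI tOO : TopologicalSpace (Function.End Ω) := funTop Ω
    refine continuous_pi fun q => ?_
    rw [continuous_discrete_rng]
    intro r
    have hset : (fun f : Mmon => (Subtype.val f : Function.End ℚ) q) ⁻¹' {r}
        = (fun f : Mmon => ((θ (MtoE f) : E') : Function.End Ω)) ⁻¹'
          {u : Function.End Ω | u (L41.psi θ x₀ q) = L41.psi θ x₀ r} := by
      ext f
      simp only [Set.mem_preimage, Set.mem_singleton_iff, Set.mem_setOf_eq]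
      constructor
      · intro h
        have h2 := L41.psi_equivariant θ x₀ (MtoE f) q
        rw [h2, show ((MtoE f : Emon) : Function.End ℚ) q = (f : Function.End ℚ) q from rfl,
          h]
      · intro h
        have h2 := L41.psi_equivariant θ x₀ (MtoE f) q
        rw [h2] at h
        exact L41.psi_injective θ hx₀ h
    rw [hset]
    exact (L41.isOpen_coord (L41.psi θ x₀ q) (L41.psi θ x₀ r)).preimage
      continuous_induced_dom
  have hind : monTop Mmon =
      (funTop Ω).induced (fun f : Mmon => ((θ (MtoE f) : E') : Function.End Ω)) := by
    apply le_antisymm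
    · have h1 : monTop Mmon ≤
          (funTop Ω).induced (fun f : Mmon => ((θ (MtoE f) : E') : Function.End Ω)) := by
        letI tM : TopologicalSpace Mmon := monTop Mmon
        letI tOO : TopologicalSpace (Function.End Ω) := funTop Ω
        exact continuous_iff_le_induced.mp hcont
      exact h1
    · have h2 : ((funTop Ω).induced (fun f : Mmon => ((θ (MtoE f) : E') : Function.End Ω)))
          ≤ (funTop ℚ).induced (Subtype.val : Mmon → Function.End ℚ) := by
        letI tInd : TopologicalSpace Mmon :=
          (funTop Ω).induced (fun f : Mmon => ((θ (MtoE f) : E') : Function.End Ω))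
        letI tQQ : TopologicalSpace (Function.End ℚ) := funTop ℚ
        exact continuous_iff_le_induced.mp hval
      exact h2
  refine ⟨L41.Mimage_closed θ hE' hx₀,
    @Topology.IsEmbedding.mk _ _ (monTop Mmon) (funTop Ω) _
      (@Topology.IsInducing.mk _ _ (monTop Mmon) (funTop Ω) _ hind) hinj, ?_⟩
  ext y
  exact ⟨fun ⟨f, hf⟩ => ⟨f, hf⟩, fun ⟨f, hf⟩ => ⟨f, hf⟩⟩
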